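/- The LOCC* map constructed from the nine-state tables perfectly discriminates the nine orthogonal product states: for each k ∈ {1,...,9}, ∑_{a,b=1}^{3} (K^{(A)}_{a|b} ⊗ K^{(B)}_{b|a}) |ψ_k⟩⟨ψ_k| (K^{(A)}_{a|b} ⊗ K^{(B)}_{b|a})† = |k⟩⟨k| ⊗ |k⟩⟨k|, where the output is on C^9 ⊗ C^9. -/

import Mathlib

open Matrix BigOperators ComplexOrder Kronecker

noncomputable section

abbrev Mat (n : Type) [Fintype n] [DecidableEq n] : Type := Matrix n n ℂ

def sliceM {n : Type} [Fintype n] [DecidableEq n] {k : Type} (X : Matrix (n × k) (n × k) ℂ) (i j : k) :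
    Matrix n n ℂ := Matrix.of fun a b => X (a, i) (b, j)

def IsCP {n m : Type} [Fintype n][DecidableEq n][Fintype m][DecidableEq m]
    (M : Mat n →ₗ[ℂ] Mat m) : Prop :=
  ∀ (d : ℕ) (X : Matrix (n × Fin d) (n × Fin d) ℂ), X.PosSemidef →
    (Matrix.of fun p q : m × Fin d => (M (sliceM X p.2 q.2)) p.1 q.1).PosSemidef

def IsTP {n m : Type} [Fintype n][DecidableEq n][Fintype m][DecidableEq m]
    (M : Mat n →ₗ[ℂ] Mat m) : Prop := ∀ X : Mat n, (M X).trace = X.trace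

def tensorMap {nA mA nB mB : Type} [Fintype nA][DecidableEq nA][Fintype mA][DecidableEq mA]
    [Fintype nB][DecidableEq nB][Fintype mB][DecidableEq mB]
    (A : Mat nA →ₗ[ℂ] Mat mA) (B : Mat nB →ₗ[ℂ] Mat mB) :
    Mat (nA × nB) →ₗ[ℂ] Mat (mA × mB) where
  toFun X := ∑ c : nA, ∑ c' : nA, ∑ d : nB, ∑ d' : nB,
    X (c, d) (c', d') • ((A (Matrix.single c c' 1)) ⊗ₖ (B (Matrix.single d d' 1)))
  map_add' X Y := by
    simp [Matrix.add_apply, add_smul, Finset.sum_add_distrib]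
  map_smul' r X := by
    simp [Matrix.smul_apply, smul_smul, Finset.smul_sum]

/-- Computational basis ket of ℂ³. -/
def ket3 (a : Fin 3) : Fin 3 → ℂ := Pi.single a 1

/-- Computational basis ket of ℂ⁹ (|k⟩ of the paper is `ket9 (k-1)`). -/
def ket9 (a : Fin 9) : Fin 9 → ℂ := Pi.single a 1

/-- The normalized superposition (|a⟩ + s|b⟩)/√2 (use s = 1 for |a+b⟩, s = −1 for |a−b⟩). -/
noncomputable def sup3 (a b : Fin 3) (s : ℂ) : Fin 3 → ℂ :=
  fun j => (ket3 a j + s * ket3 b j) / (Real.sqrt 2 : ℂ)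

/-- The rank-one operator |k⟩⟨v| : ℂ³ → ℂ⁹. -/
noncomputable def outer (k : Fin 9) (v : Fin 3 → ℂ) : Matrix (Fin 9) (Fin 3) ℂ :=
  Matrix.vecMulVec (ket9 k) (star v)

/-- Alice's Kraus operators K^{(A)}_{a|b}; first index a, second index b (0-based). -/
noncomputable def KA : Fin 3 → Fin 3 → Matrix (Fin 9) (Fin 3) ℂ :=
  ![![outer 0 (ket3 0), outer 1 (ket3 0), outer 2 (sup3 0 1 1)],
    ![outer 7 (sup3 1 2 (-1)), outer 8 (ket3 1), outer 3 (sup3 0 1 (-1))],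
    ![outer 6 (sup3 1 2 1), outer 5 (ket3 2), outer 4 (ket3 2)]]

/-- Bob's Kraus operators K^{(B)}_{b|a}; first index b, second index a (0-based). -/
noncomputable def KB : Fin 3 → Fin 3 → Matrix (Fin 9) (Fin 3) ℂ :=
  ![![outer 0 (sup3 0 1 1), outer 7 (ket3 0), outer 6 (ket3 0)],
    ![outer 1 (sup3 0 1 (-1)), outer 8 (ket3 1), outer 5 (sup3 1 2 (-1))],
    ![outer 2 (ket3 2), outer 3 (ket3 2), outer 4 (sup3 1 2 1)]]

/-- The nine orthogonal product states |ψ_k⟩ ∈ ℂ³ ⊗ ℂ³ (|ψ_k⟩ of the paper is `psi (k-1)`). -/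
noncomputable def psi : Fin 9 → (Fin 3 × Fin 3 → ℂ) :=
  ![fun p => ket3 0 p.1 * sup3 0 1 1 p.2,
    fun p => ket3 0 p.1 * sup3 0 1 (-1) p.2,
    fun p => sup3 0 1 1 p.1 * ket3 2 p.2,
    fun p => sup3 0 1 (-1) p.1 * ket3 2 p.2,
    fun p => ket3 2 p.1 * sup3 1 2 1 p.2,
    fun p => ket3 2 p.1 * sup3 1 2 (-1) p.2,
    fun p => sup3 1 2 1 p.1 * ket3 0 p.2,
    fun p => sup3 1 2 (-1) p.1 * ket3 0 p.2,
    fun p => ket3 1 p.1 * ket3 1 p.2]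

lemma outer_kron' (k k' : Fin 9) (v w : Fin 3 → ℂ) :
    outer k v ⊗ₖ outer k' w =
      vecMulVec (fun p : Fin 9 × Fin 9 => ket9 k p.1 * ket9 k' p.2)
        (star fun p : Fin 3 × Fin 3 => v p.1 * w p.2) := by
  ext ⟨i, j⟩ ⟨i', j'⟩
  simp [outer, vecMulVec_apply]
  ring

lemma projket_kron' (k k' : Fin 9) :
    vecMulVec (ket9 k) (star (ket9 k)) ⊗ₖ vecMulVec (ket9 k') (star (ket9 k')) =
      vecMulVec (fun p : Fin 9 × Fin 9 => ket9 k p.1 * ket9 k' p.2)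
        (star fun p : Fin 9 × Fin 9 => ket9 k p.1 * ket9 k' p.2) := by
  ext ⟨i, j⟩ ⟨i', j'⟩
  simp [vecMulVec_apply]
  ring

lemma sandwich' {n m : Type} [Fintype n] (u : m → ℂ) (v ψ : n → ℂ) :
    vecMulVec u (star v) * vecMulVec ψ (star ψ) * (vecMulVec u (star v))ᴴ
      = ((star v ⬝ᵥ ψ) * (star ψ ⬝ᵥ v)) • vecMulVec u (star u) := by
  ext p q
  simp [Matrix.mul_apply, vecMulVec_apply, dotProduct, Finset.sum_mul, Finset.mul_sum]
  congr 1; ext r; congr 1; ext s; ring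

set_option maxHeartbeats 2000000 in
/-- the LOCC* map from the nine-state tables perfectly discriminates the
nine states: ∑_{a,b} (K^A_{a|b} ⊗ K^B_{b|a}) |ψ_k⟩⟨ψ_k| (K^A_{a|b} ⊗ K^B_{b|a})†
= |k⟩⟨k| ⊗ |k⟩⟨k|. -/
theorem stmt_7 :
    ∀ k : Fin 9,
      ∑ a : Fin 3, ∑ b : Fin 3,
        ((KA a b) ⊗ₖ (KB b a)) * Matrix.vecMulVec (psi k) (star (psi k)) *
          ((KA a b) ⊗ₖ (KB b a))ᴴ
      = (Matrix.vecMulVec (ket9 k) (star (ket9 k))) ⊗ₖ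
          (Matrix.vecMulVec (ket9 k) (star (ket9 k))) := by
  have h2 : ((Real.sqrt 2 : ℝ) : ℂ) * ((Real.sqrt 2 : ℝ) : ℂ) = 2 := by
    rw [← Complex.ofReal_mul, Real.mul_self_sqrt (by norm_num : (0:ℝ) ≤ 2)]
    norm_num
  have h2i : ((Real.sqrt 2 : ℝ) : ℂ)⁻¹ * ((Real.sqrt 2 : ℝ) : ℂ)⁻¹ = 2⁻¹ := by
    rw [← mul_inv, h2]
  intro k
  fin_cases k <;>
  · simp only [Fin.sum_univ_three]
    simp only [KA, KB, Matrix.cons_val_zero, Matrix.cons_val_one, Matrix.cons_val_two,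
      Matrix.head_cons, Matrix.tail_cons, Matrix.head_fin_const]
    simp only [outer_kron', sandwich', projket_kron']
    norm_num +decide [dotProduct, Fintype.sum_prod_type, Fin.sum_univ_three, psi, sup3,
      ket3, ket9, Pi.single_apply, Complex.ext_iff, div_mul_div_comm, h2, h2i,
      div_eq_mul_inv, neg_mul, mul_neg, one_mul, neg_neg]
    try rfl
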